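/- Let w* in R^d satisfy y_i·(w*)ᵀx_i > 0 for all samples i. Then for the ReLU exponential loss L(w) = (1/n)∑_i exp(-y_i·max(0, wᵀx_i)), we have L(αw*) → n⁻/n as α → +∞, where n⁻ is the number of samples with label -1. -/

import Mathlib

open Filter Finset Real

/-- If `y i * ⟪w*, x i⟫ > 0` for all samples, then the ReLU exponential
loss `L(α w*) → n⁻/n` as `α → +∞`. -/
theorem relu_loss_tendsto_global_min
    {d n : ℕ} (hn : 0 < n)
    (x : Fin n → EuclideanSpace ℝ (Fin d)) (y : Fin n → ℝ)
    (hy : ∀ i, y i = 1 ∨ y i = -1)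
    (w : EuclideanSpace ℝ (Fin d))
    (hw : ∀ i, 0 < y i * (inner ℝ w (x i) : ℝ)) :
    Tendsto
      (fun α : ℝ =>
        (1 / (n : ℝ)) * ∑ i, Real.exp (-(y i) * max 0 ((inner ℝ (α • w) (x i) : ℝ))))
      atTop
      (nhds (((Finset.univ.filter fun i => y i = -1).card : ℝ) / n)) := by
  have key : ∀ i : Fin n, Tendsto
      (fun α : ℝ => Real.exp (-(y i) * max 0 ((inner ℝ (α • w) (x i) : ℝ))))
      atTop (nhds (if y i = -1 then (1:ℝ) else 0)) := by
    intro i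
    have hsm : ∀ α : ℝ, (inner ℝ (α • w) (x i) : ℝ) = α * (inner ℝ w (x i) : ℝ) := by
      intro α; rw [real_inner_smul_left]
    rcases hy i with h1 | h1
    · -- y i = 1, inner w (x i) > 0
      have hc : (0:ℝ) < (inner ℝ w (x i) : ℝ) := by
        have := hw i; rw [h1] at this; simpa using this
      rw [if_neg (by rw [h1]; norm_num)]
      have hev : ∀ᶠ α : ℝ in atTop,
          Real.exp (-(y i) * max 0 ((inner ℝ (α • w) (x i) : ℝ)))
            = Real.exp (-(α * (inner ℝ w (x i) : ℝ))) := by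
        filter_upwards [eventually_ge_atTop (0:ℝ)] with α hα
        rw [hsm, h1, max_eq_right (mul_nonneg hα hc.le)]; ring_nf
      refine Tendsto.congr' (hev.mono fun α h => h.symm) ?_
      have : Tendsto (fun α : ℝ => -(α * (inner ℝ w (x i) : ℝ))) atTop atBot := by
        exact tendsto_neg_atBot_iff.mpr (tendsto_id.atTop_mul_const hc)
      exact Real.tendsto_exp_atBot.comp this
    · -- y i = -1, inner w (x i) < 0
      have hc : (inner ℝ w (x i) : ℝ) < 0 := by
        have := hw i; rw [h1] at this; nlinarith
      rw [if_pos h1]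
      have hev : ∀ᶠ α : ℝ in atTop,
          Real.exp (-(y i) * max 0 ((inner ℝ (α • w) (x i) : ℝ))) = 1 := by
        filter_upwards [eventually_ge_atTop (0:ℝ)] with α hα
        rw [hsm, max_eq_left (mul_nonpos_of_nonneg_of_nonpos hα hc.le)]
        simp
      exact Tendsto.congr' (hev.mono fun α h => h.symm) tendsto_const_nhds
  have hsum := tendsto_finset_sum Finset.univ (fun i _ => key i)
  have hmul := hsum.const_mul (1 / (n : ℝ))
  convert hmul using 2
  rw [Finset.sum_boole]
  push_cast
  ring
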